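/- Let n ≥ 2, let R = ℝ⟦t⟧ be the ring of formal power series over ℝ, M = Fin (2n) → R, and Ω_R the standard symplectic R-bilinear form on M. Let B : M → End_R(M) be an R-linear map with Ω_R(B(X)Y,Z) totally symmetric in (X,Y,Z), encoding a formal curve of translation-invariant symplectic connections. If B is of Ricci type, then B(X)∘B(Y) = 0 for all X,Y ∈ M; in particular the formal curvature B(X)∘B(Y) − B(Y)∘B(X) and the formal Ricci tensor Tr(B(X)∘B(Y)) vanish identically (the formal curve of connections is flat). -/

import Mathlib

noncomputable section

/-- The standard symplectic `R`-bilinear form on `M = Fin (2n) → R`, `R = ℝ⟦t⟧`: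
`Ω_R(x,y) = Σ_{i=1}^{n} (x_i·y_{n+i} − x_{n+i}·y_i)`. -/
def OmegaR (n : ℕ) (x y : Fin (2*n) → PowerSeries ℝ) : PowerSeries ℝ :=
  ∑ i : Fin n, (x ⟨i.1, by have := i.isLt; omega⟩ * y ⟨n + i.1, by have := i.isLt; omega⟩
    - x ⟨n + i.1, by have := i.isLt; omega⟩ * y ⟨i.1, by have := i.isLt; omega⟩)

namespace FlatAux

abbrev Rr : Type := PowerSeries ℝ
abbrev Mm (n : ℕ) : Type := Fin (2*n) → PowerSeries ℝ

variable {n : ℕ}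

def ee (i : Fin n) : Mm n := Pi.single (⟨i.1, by have := i.isLt; omega⟩ : Fin (2*n)) 1
def ff (i : Fin n) : Mm n := Pi.single (⟨n + i.1, by have := i.isLt; omega⟩ : Fin (2*n)) 1

lemma ee_apply (i : Fin n) (k : Fin (2*n)) : ee i k = if k.1 = i.1 then 1 else 0 := by
  simp [ee, Pi.single_apply, Fin.ext_iff]

lemma ff_apply (i : Fin n) (k : Fin (2*n)) : ff i k = if k.1 = n + i.1 then 1 else 0 := by
  simp [ff, Pi.single_apply, Fin.ext_iff]

lemma omega_add_left (x x' y : Mm n) : OmegaR n (x + x') y = OmegaR n x y + OmegaR n x' y := by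
  unfold OmegaR
  rw [← Finset.sum_add_distrib]
  exact Finset.sum_congr rfl fun i _ => by simp only [Pi.add_apply]; ring

lemma omega_smul_left (c : Rr) (x y : Mm n) : OmegaR n (c • x) y = c * OmegaR n x y := by
  unfold OmegaR
  rw [Finset.mul_sum]
  exact Finset.sum_congr rfl fun i _ => by simp only [Pi.smul_apply, smul_eq_mul]; ring

lemma omega_add_right (x y y' : Mm n) : OmegaR n x (y + y') = OmegaR n x y + OmegaR n x y' := by
  unfold OmegaR
  rw [← Finset.sum_add_distrib]
  exact Finset.sum_congr rfl fun i _ => by simp only [Pi.add_apply]; ring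

lemma omega_smul_right (c : Rr) (x y : Mm n) : OmegaR n x (c • y) = c * OmegaR n x y := by
  unfold OmegaR
  rw [Finset.mul_sum]
  exact Finset.sum_congr rfl fun i _ => by simp only [Pi.smul_apply, smul_eq_mul]; ring

lemma omega_antisymm (x y : Mm n) : OmegaR n x y = - OmegaR n y x := by
  unfold OmegaR
  rw [← Finset.sum_neg_distrib]
  exact Finset.sum_congr rfl fun i _ => by ring

lemma omega_neg_left (x y : Mm n) : OmegaR n (-x) y = - OmegaR n x y := by
  unfold OmegaR
  rw [← Finset.sum_neg_distrib]
  exact Finset.sum_congr rfl fun i _ => by simp only [Pi.neg_apply]; ring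

lemma omega_zero_left (y : Mm n) : OmegaR n 0 y = 0 := by
  unfold OmegaR
  apply Finset.sum_eq_zero
  intro i _
  simp

lemma omega_sub_left (x x' y : Mm n) : OmegaR n (x - x') y = OmegaR n x y - OmegaR n x' y := by
  rw [sub_eq_add_neg, omega_add_left, omega_neg_left]; ring

lemma omega_ff_right (x : Mm n) (i : Fin n) :
    OmegaR n x (ff i) = x ⟨i.1, by have := i.isLt; omega⟩ := by
  unfold OmegaR
  rw [Finset.sum_eq_single i]
  · rw [ff_apply, ff_apply,
      if_pos (by simp only [Fin.val_mk]), if_neg (by simp only [Fin.val_mk]; have := i.isLt; omega)]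
    ring
  · intro j _ hj
    have hji : j.1 ≠ i.1 := fun h => hj (Fin.ext h)
    rw [ff_apply, ff_apply, if_neg (by simp only [Fin.val_mk]; omega),
      if_neg (by simp only [Fin.val_mk]; have := j.isLt; omega)]
    ring
  · intro h; exact absurd (Finset.mem_univ i) h

lemma omega_ee_right (x : Mm n) (i : Fin n) :
    OmegaR n x (ee i) = -x ⟨n + i.1, by have := i.isLt; omega⟩ := by
  unfold OmegaR
  rw [Finset.sum_eq_single i]
  · rw [ee_apply, ee_apply,
      if_neg (by simp only [Fin.val_mk]; have := i.isLt; omega), if_pos (by simp only [Fin.val_mk])]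
    ring
  · intro j _ hj
    have hji : j.1 ≠ i.1 := fun h => hj (Fin.ext h)
    rw [ee_apply, ee_apply, if_neg (by simp only [Fin.val_mk]; omega),
      if_neg (by simp only [Fin.val_mk]; have := i.isLt; omega)]
    ring
  · intro h; exact absurd (Finset.mem_univ i) h

lemma nondeg (v : Mm n) (h : ∀ w : Mm n, OmegaR n v w = 0) : v = 0 := by
  funext k
  by_cases hk : k.1 < n
  · have := h (ff ⟨k.1, hk⟩)
    rw [omega_ff_right] at this
    have hkk : (⟨(⟨k.1, hk⟩ : Fin n).1, by simp only [Fin.val_mk]; omega⟩ : Fin (2*n)) = k :=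
      Fin.ext rfl
    rwa [hkk] at this
  · have hk2 := k.isLt
    have := h (ee ⟨k.1 - n, by omega⟩)
    rw [omega_ee_right] at this
    have hkk : (⟨n + (⟨k.1 - n, by omega⟩ : Fin n).1, by simp only [Fin.val_mk]; omega⟩ :
        Fin (2*n)) = k := Fin.ext (by simp only [Fin.val_mk]; omega)
    rw [hkk] at this
    exact neg_eq_zero.mp this

lemma trace_eq_sum (f : Module.End Rr (Mm n)) :
    LinearMap.trace Rr (Mm n) f = ∑ j : Fin (2*n), f (Pi.single j 1) j := by
  rw [LinearMap.trace_eq_matrix_trace Rr (Pi.basisFun Rr (Fin (2*n))) f]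
  rw [Matrix.trace]
  apply Finset.sum_congr rfl
  intro j _
  rw [Matrix.diag_apply, LinearMap.toMatrix_apply, Pi.basisFun_apply, Pi.basisFun_repr]

lemma trace_smulRight (φ : Mm n →ₗ[Rr] Rr) (u : Mm n) :
    LinearMap.trace Rr (Mm n) (φ.smulRight u) = φ u := by
  rw [trace_eq_sum]
  have h : ∀ j : Fin (2*n), (φ.smulRight u) (Pi.single j 1) j = φ (Pi.single j (u j)) := by
    intro j
    rw [LinearMap.smulRight_apply, Pi.smul_apply, smul_eq_mul]
    have h2 : Pi.single j (u j) = (u j) • (Pi.single j 1 : Mm n) := by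
      rw [← Pi.single_smul, smul_eq_mul, mul_one]
    rw [h2, map_smul, smul_eq_mul, mul_comm]
  rw [Finset.sum_congr rfl fun j _ => h j, ← map_sum]
  congr 1
  exact Finset.univ_sum_single u

/-- `ω(·, v)` as a linear map (first argument). -/
def omegaL1 (v : Mm n) : Mm n →ₗ[Rr] Rr where
  toFun w := OmegaR n w v
  map_add' x y := omega_add_left x y v
  map_smul' c x := by simpa [smul_eq_mul] using omega_smul_left c x v

@[simp] lemma omegaL1_apply (v w : Mm n) : omegaL1 v w = OmegaR n w v := rfl

/-- `ω(v, ·)` as a linear map (second argument). -/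
def omegaL2 (v : Mm n) : Mm n →ₗ[Rr] Rr where
  toFun w := OmegaR n v w
  map_add' y y' := omega_add_right v y y'
  map_smul' c w := by simpa [smul_eq_mul] using omega_smul_right c v w

@[simp] lemma omegaL2_apply (v w : Mm n) : omegaL2 v w = OmegaR n v w := rfl

variable (B : Mm n →ₗ[Rr] Module.End Rr (Mm n))

/-- `a ↦ Tr(B a ∘ B b)` as a linear map. -/
def rL (b : Mm n) : Mm n →ₗ[Rr] Rr :=
  (LinearMap.trace Rr (Mm n)) ∘ₗ (LinearMap.mulRight Rr (B b)) ∘ₗ B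

@[simp] lemma rL_apply (b a : Mm n) :
    rL B b a = LinearMap.trace Rr (Mm n) (B a * B b) := rfl

/-- `b ↦ Tr(B a ∘ B b)` as a linear map. -/
def rL2 (a : Mm n) : Mm n →ₗ[Rr] Rr :=
  (LinearMap.trace Rr (Mm n)) ∘ₗ (LinearMap.mulLeft Rr (B a)) ∘ₗ B

@[simp] lemma rL2_apply (a b : Mm n) :
    rL2 B a b = LinearMap.trace Rr (Mm n) (B a * B b) := rfl

/-- The "Ricci endomorphism"-image: `ρ a` with `ω(ρ a, T) = Tr(B a ∘ B T)`. -/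
def rho (a : Mm n) : Mm n := fun k =>
  if h : k.1 < n then LinearMap.trace Rr (Mm n) (B a * B (ff ⟨k.1, h⟩))
  else -(LinearMap.trace Rr (Mm n) (B a * B (ee ⟨k.1 - n, by have := k.isLt; omega⟩)))


lemma rho_omega (a T : Mm n) :
    OmegaR n (rho B a) T = LinearMap.trace Rr (Mm n) (B a * B T) := by
  have hmaps : omegaL2 (rho B a) = rL2 B a := by
    apply Module.Basis.ext (Pi.basisFun Rr (Fin (2*n)))
    intro j
    rw [Pi.basisFun_apply]
    by_cases h : j.1 < n
    · have hj : (Pi.single j 1 : Mm n) = ee ⟨j.1, h⟩ := by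
        unfold ee
        exact congrArg (fun k : Fin (2*n) => (Pi.single k 1 : Mm n)) (Fin.ext rfl)
      rw [hj, omegaL2_apply, rL2_apply, omega_ee_right]
      simp only [rho, Fin.val_mk]
      rw [dif_neg (by omega), neg_neg]
      have hee : (⟨n + (⟨j.1, h⟩ : Fin n).1 - n, by omega⟩ : Fin n) = (⟨j.1, h⟩ : Fin n) :=
        Fin.ext (show n + j.1 - n = j.1 by omega)
      try rw [hee]
    · have hn2 := j.isLt
      have hj : (Pi.single j 1 : Mm n) = ff ⟨j.1 - n, by omega⟩ := by
        unfold ff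
        exact congrArg (fun k : Fin (2*n) => (Pi.single k 1 : Mm n))
          (Fin.ext (show j.1 = n + (j.1 - n) by omega))
      rw [hj, omegaL2_apply, rL2_apply, omega_ff_right]
      simp only [rho, Fin.val_mk]
      rw [dif_pos (by omega)]
  have := congrArg (fun φ : Mm n →ₗ[Rr] Rr => φ T) hmaps
  simpa using this

set_option maxHeartbeats 1000000 in
theorem main (n : ℕ) (hn : 2 ≤ n)
    (B : Mm n →ₗ[Rr] Module.End Rr (Mm n))
    (hsym₁ : ∀ X Y Z : Mm n, OmegaR n (B X Y) Z = OmegaR n (B Y X) Z)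
    (hsym₂ : ∀ X Y Z : Mm n, OmegaR n (B X Y) Z = OmegaR n (B X Z) Y)
    (hRicci : ∀ X Y Z T : Mm n,
      OmegaR n ((B X * B Y - B Y * B X) Z) T =
        (-(1 / (2*((n:ℝ)+1)))) •
          (2 * OmegaR n X Y * LinearMap.trace Rr (Mm n) (B Z * B T)
           + OmegaR n X Z * LinearMap.trace Rr (Mm n) (B Y * B T)
           + OmegaR n X T * LinearMap.trace Rr (Mm n) (B Y * B Z)
           - OmegaR n Y Z * LinearMap.trace Rr (Mm n) (B X * B T)
           - OmegaR n Y T * LinearMap.trace Rr (Mm n) (B X * B Z))) :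
    (∀ X Y : Mm n, B X * B Y = 0) ∧ (∀ X Y : Mm n, LinearMap.trace Rr (Mm n) (B X * B Y) = 0) := by
  have hfactor : ∀ u v : Rr, u * v = 0 → u ≠ 0 → v = 0 := by
    intro u v h hu
    rcases mul_eq_zero.mp h with h' | h'
    · exact absurd h' hu
    · exact h'
  have hrs : ∀ a b : Mm n, LinearMap.trace Rr (Mm n) (B a * B b) = LinearMap.trace Rr (Mm n) (B b * B a) :=
    fun a b => LinearMap.trace_mul_comm Rr (B a) (B b)
  have Bsym : ∀ X Y : Mm n, B X Y = B Y X := by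
    intro X Y
    have h0 : B X Y - B Y X = 0 := by
      apply nondeg
      intro w
      rw [omega_sub_left, hsym₁ X Y w, sub_self]
    exact sub_eq_zero.mp h0
  have hsymO : ∀ a b c : Mm n, OmegaR n (B a b) c = OmegaR n (B c b) a := by
    intro a b c
    rw [hsym₂ a b c, hsym₁ a c b, hsym₂ c a b]
  have key3 : ∀ a u b z : Mm n, OmegaR n (B a u) (B b z) = -(OmegaR n (B b (B a u)) z) := by
    intro a u b z
    rw [omega_antisymm (B a u) (B b z), hsym₂ b z (B a u)]
  have Kc : ∀ X Y Z T : Mm n, OmegaR n (B X (B Y Z)) T = -(OmegaR n (B Y (B X T)) Z) := by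
    intro X Y Z T
    rw [hsym₂ X (B Y Z) T, key3 X T Y Z]
  have K14 : ∀ X Y Z T : Mm n, OmegaR n (B X (B Y Z)) T = OmegaR n (B T (B Y Z)) X :=
    fun X Y Z T => hsymO X (B Y Z) T
  have K23 : ∀ X Y Z T : Mm n, OmegaR n (B X (B Y Z)) T = OmegaR n (B X (B Z Y)) T := by
    intro X Y Z T; rw [Bsym Y Z]
  have Kpair : ∀ X Y Z T : Mm n, OmegaR n (B X (B Y Z)) T = -(OmegaR n (B Z (B T X)) Y) := by
    intro X Y Z T
    rw [Kc X Y Z T, K14 Y X T Z, K23 Z X T Y]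
  have hCne : ∀ a : ℝ, a ≠ 0 → (PowerSeries.C (R := ℝ)) a ≠ 0 := by
    intro a ha h
    have h2 := congrArg (PowerSeries.constantCoeff (R := ℝ)) h
    rw [PowerSeries.constantCoeff_C, map_zero] at h2
    exact ha h2
  have hn2 : (2:ℝ) ≤ (n:ℝ) := by exact_mod_cast hn
  have hgne : (PowerSeries.C (R := ℝ) (2*((n:ℝ)+1))) ≠ 0 := hCne _ (by positivity)
  have h2ne : (2 : Rr) ≠ 0 := by
    intro h
    apply hCne 2 two_ne_zero
    rw [show ((PowerSeries.C (R := ℝ)) (2:ℝ)) = (2:Rr) from map_ofNat _ 2]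
    exact h
  have ric : ∀ X Y Z T : Mm n,
      (PowerSeries.C (R := ℝ) (2*((n:ℝ)+1))) * (OmegaR n (B X (B Y Z)) T - OmegaR n (B Y (B X Z)) T) =
      -(2 * OmegaR n X Y * LinearMap.trace Rr (Mm n) (B Z * B T)
        + OmegaR n X Z * LinearMap.trace Rr (Mm n) (B Y * B T)
        + OmegaR n X T * LinearMap.trace Rr (Mm n) (B Y * B Z)
        - OmegaR n Y Z * LinearMap.trace Rr (Mm n) (B X * B T)
        - OmegaR n Y T * LinearMap.trace Rr (Mm n) (B X * B Z)) := by
    intro X Y Z T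
    have h := hRicci X Y Z T
    rw [LinearMap.sub_apply, Module.End.mul_apply, Module.End.mul_apply, omega_sub_left] at h
    rw [h, PowerSeries.smul_eq_C_mul, ← mul_assoc, ← map_mul]
    have hc : (2*((n:ℝ)+1)) * (-(1 / (2*((n:ℝ)+1)))) = -1 := by
      have hpos : (0:ℝ) < 2*((n:ℝ)+1) := by positivity
      field_simp
    rw [hc, map_neg, map_one, neg_one_mul]
  have star : ∀ X Y Z T : Mm n,
      (PowerSeries.C (R := ℝ) (2*((n:ℝ)+1))) * (OmegaR n (B X (B Y Z)) T + OmegaR n (B X (B T Y)) Z) =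
      -(2 * OmegaR n X Y * LinearMap.trace Rr (Mm n) (B Z * B T)
        + OmegaR n X Z * LinearMap.trace Rr (Mm n) (B Y * B T)
        + OmegaR n X T * LinearMap.trace Rr (Mm n) (B Y * B Z)
        - OmegaR n Y Z * LinearMap.trace Rr (Mm n) (B X * B T)
        - OmegaR n Y T * LinearMap.trace Rr (Mm n) (B X * B Z)) := by
    intro X Y Z T
    have h1 := ric X Y Z T
    have h2 : OmegaR n (B Y (B X Z)) T = -(OmegaR n (B X (B T Y)) Z) := by
      rw [K23 Y X Z T, Kpair Y Z X T]
    rw [h2] at h1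
    linear_combination h1
  have Afor : ∀ X Y Z T : Mm n,
      (PowerSeries.C (R := ℝ) (2*((n:ℝ)+1))) * OmegaR n (B X (B Y Z)) T =
      -(OmegaR n X Y * LinearMap.trace Rr (Mm n) (B Z * B T) + OmegaR n X Z * LinearMap.trace Rr (Mm n) (B Y * B T)
        - OmegaR n Y T * LinearMap.trace Rr (Mm n) (B X * B Z) - OmegaR n Z T * LinearMap.trace Rr (Mm n) (B X * B Y)) := by
    intro X Y Z T
    have s1 := star X Y Z T
    have s2 := star X T Y Z
    have s3 := star X Z T Y
    have h2 : 2 * ((PowerSeries.C (R := ℝ) (2*((n:ℝ)+1))) * OmegaR n (B X (B Y Z)) T) =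
        2 * (-(OmegaR n X Y * LinearMap.trace Rr (Mm n) (B Z * B T) + OmegaR n X Z * LinearMap.trace Rr (Mm n) (B Y * B T)
        - OmegaR n Y T * LinearMap.trace Rr (Mm n) (B X * B Z) - OmegaR n Z T * LinearMap.trace Rr (Mm n) (B X * B Y))) := by
      linear_combination s1 - s2 + s3 + (OmegaR n X Y) * (hrs T Z) + (OmegaR n X Z) * (hrs Y T)
        + (OmegaR n X T) * (hrs Y Z) - (LinearMap.trace Rr (Mm n) (B X * B Z)) * (omega_antisymm Y T)
        - (LinearMap.trace Rr (Mm n) (B X * B Y)) * (omega_antisymm Z T) + (LinearMap.trace Rr (Mm n) (B X * B T)) * (omega_antisymm Y Z)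
    exact mul_left_cancel₀ h2ne h2
  have Avec : ∀ X Y Z : Mm n, (PowerSeries.C (R := ℝ) (2*((n:ℝ)+1))) • (B X (B Y Z)) =
      -(OmegaR n X Y • rho B Z + OmegaR n X Z • rho B Y
        - (LinearMap.trace Rr (Mm n) (B X * B Z)) • Y - (LinearMap.trace Rr (Mm n) (B X * B Y)) • Z) := by
    intro X Y Z
    have hsub : (PowerSeries.C (R := ℝ) (2*((n:ℝ)+1))) • (B X (B Y Z)) -
        (-(OmegaR n X Y • rho B Z + OmegaR n X Z • rho B Y
        - (LinearMap.trace Rr (Mm n) (B X * B Z)) • Y - (LinearMap.trace Rr (Mm n) (B X * B Y)) • Z)) = 0 := by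
      apply nondeg
      intro T
      simp only [omega_sub_left, omega_neg_left, omega_add_left, omega_smul_left, rho_omega]
      linear_combination Afor X Y Z T
    exact sub_eq_zero.mp hsub
  have hop : ∀ Y Z V : Mm n, (PowerSeries.C (R := ℝ) (2*((n:ℝ)+1))) • ((B (B Y Z)) * (B V)) =
      -( ((omegaL1 Y).comp (B V)).smulRight (rho B Z)
        + ((omegaL1 Z).comp (B V)).smulRight (rho B Y)
        - ((rL B Z).comp (B V)).smulRight Y
        - ((rL B Y).comp (B V)).smulRight Z ) := by
    intro Y Z V
    apply LinearMap.ext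
    intro w
    have h1 : ((PowerSeries.C (R := ℝ) (2*((n:ℝ)+1))) • ((B (B Y Z)) * (B V))) w = (PowerSeries.C (R := ℝ) (2*((n:ℝ)+1))) • (B (B V w) (B Y Z)) := by
      rw [LinearMap.smul_apply, Module.End.mul_apply, Bsym (B Y Z) (B V w)]
    rw [h1, Avec (B V w) Y Z]
    simp only [LinearMap.neg_apply, LinearMap.add_apply, LinearMap.sub_apply,
      LinearMap.smulRight_apply, LinearMap.comp_apply, omegaL1_apply, rL_apply]
  have htr : ∀ Y Z V : Mm n, (PowerSeries.C (R := ℝ) (2*((n:ℝ)+1))) * LinearMap.trace Rr (Mm n) (B (B Y Z) * B V) =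
      -(OmegaR n (B V (rho B Z)) Y + OmegaR n (B V (rho B Y)) Z
        - LinearMap.trace Rr (Mm n) (B (B V Y) * B Z) - LinearMap.trace Rr (Mm n) (B (B V Z) * B Y)) := by
    intro Y Z V
    have h := congrArg (LinearMap.trace Rr (Mm n)) (hop Y Z V)
    rw [map_smul, map_neg, map_sub, map_sub, map_add, trace_smulRight, trace_smulRight,
      trace_smulRight, trace_smulRight] at h
    simpa [smul_eq_mul, LinearMap.comp_apply, omegaL1_apply, rL_apply] using h
  have hμE : ∀ Y Z V : Mm n, (PowerSeries.C (R := ℝ) (2*((n:ℝ)+1))) * OmegaR n (B Y Z) (rho B V) =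
      2 * OmegaR n (B V Y) (rho B Z) + 2 * OmegaR n (B V Z) (rho B Y) := by
    intro Y Z V
    have h := htr Y Z V
    have e1 : LinearMap.trace Rr (Mm n) (B (B Y Z) * B V) = -(OmegaR n (B Y Z) (rho B V)) := by
      rw [hrs (B Y Z) V, ← rho_omega B V (B Y Z)]
      exact omega_antisymm _ _
    have e2 : OmegaR n (B V (rho B Z)) Y = OmegaR n (B V Y) (rho B Z) := hsym₂ V (rho B Z) Y
    have e3 : OmegaR n (B V (rho B Y)) Z = OmegaR n (B V Z) (rho B Y) := hsym₂ V (rho B Y) Z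
    have e4 : LinearMap.trace Rr (Mm n) (B (B V Y) * B Z) = -(OmegaR n (B V Y) (rho B Z)) := by
      rw [hrs (B V Y) Z, ← rho_omega B Z (B V Y)]
      exact omega_antisymm _ _
    have e5 : LinearMap.trace Rr (Mm n) (B (B V Z) * B Y) = -(OmegaR n (B V Z) (rho B Y)) := by
      rw [hrs (B V Z) Y, ← rho_omega B Y (B V Z)]
      exact omega_antisymm _ _
    linear_combination -h + (PowerSeries.C (R := ℝ) (2*((n:ℝ)+1))) * e1 + e2 + e3 - e4 - e5
  have hgp2 : (PowerSeries.C (R := ℝ) (2*((n:ℝ)+1))) + 2 ≠ 0 := by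
    have hh : (PowerSeries.C (R := ℝ) (2*((n:ℝ)+1))) + 2 = PowerSeries.C (R := ℝ) (2*((n:ℝ)+1) + 2) := by
      rw [map_add, map_ofNat]
    rw [hh]
    exact hCne _ (by positivity)
  have hgm4 : (PowerSeries.C (R := ℝ) (2*((n:ℝ)+1))) - 4 ≠ 0 := by
    have hh : (PowerSeries.C (R := ℝ) (2*((n:ℝ)+1))) - 4 = PowerSeries.C (R := ℝ) (2*((n:ℝ)+1) - 4) := by
      rw [map_sub, map_ofNat]
    rw [hh]
    apply hCne
    intro hcontra
    nlinarith
  have hμ0 : ∀ a b c : Mm n, OmegaR n (B a b) (rho B c) = 0 := by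
    intro a b c
    have h1 := hμE a b c
    have h2 := hμE b c a
    have h3 := hμE c a b
    have hqe : OmegaR n (B c b) (rho B a) = OmegaR n (B b c) (rho B a) := hsym₁ c b (rho B a)
    have hse : OmegaR n (B a c) (rho B b) = OmegaR n (B c a) (rho B b) := hsym₁ a c (rho B b)
    have hpe : OmegaR n (B b a) (rho B c) = OmegaR n (B a b) (rho B c) := hsym₁ b a (rho B c)
    have hpq : ((PowerSeries.C (R := ℝ) (2*((n:ℝ)+1))) + 2) * (OmegaR n (B a b) (rho B c) - OmegaR n (B b c) (rho B a)) = 0 := by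
      linear_combination h1 - h2 + 2 * hqe - 2 * hse
    have hps : ((PowerSeries.C (R := ℝ) (2*((n:ℝ)+1))) + 2) * (OmegaR n (B a b) (rho B c) - OmegaR n (B c a) (rho B b)) = 0 := by
      linear_combination h1 - h3 + 2 * hqe - 2 * hpe
    have hq' : OmegaR n (B b c) (rho B a) = OmegaR n (B a b) (rho B c) :=
      (sub_eq_zero.mp (hfactor _ _ hpq hgp2)).symm
    have hs' : OmegaR n (B c a) (rho B b) = OmegaR n (B a b) (rho B c) :=
      (sub_eq_zero.mp (hfactor _ _ hps hgp2)).symm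
    have hcba : OmegaR n (B c b) (rho B a) = OmegaR n (B a b) (rho B c) := by
      rw [hqe]; exact hq'
    have hcab : OmegaR n (B c a) (rho B b) = OmegaR n (B a b) (rho B c) := hs'
    have hfin : ((PowerSeries.C (R := ℝ) (2*((n:ℝ)+1))) - 4) * OmegaR n (B a b) (rho B c) = 0 := by
      linear_combination h1 + 2 * hcab + 2 * hcba
    exact hfactor _ _ hfin hgm4
  have c1 : ∀ Y Z V : Mm n, LinearMap.trace Rr (Mm n) (B (B Y Z) * B V) = 0 := by
    intro Y Z V
    rw [hrs (B Y Z) V, ← rho_omega B V (B Y Z), omega_antisymm (rho B V) (B Y Z),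
      hμ0 Y Z V, neg_zero]
  have c1' : ∀ X Y Z : Mm n, LinearMap.trace Rr (Mm n) (B X * B (B Y Z)) = 0 := by
    intro X Y Z
    rw [hrs X (B Y Z)]
    exact c1 Y Z X
  have c2 : ∀ X W : Mm n, B X (rho B W) = 0 := by
    intro X W
    apply nondeg
    intro V
    rw [hsym₂ X (rho B W) V]
    exact hμ0 X V W
  have hVI : ∀ X Y Z W V : Mm n,
      OmegaR n (B Z W) X * LinearMap.trace Rr (Mm n) (B Y * B V) + OmegaR n (B Z W) V * LinearMap.trace Rr (Mm n) (B X * B Y)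
      = LinearMap.trace Rr (Mm n) (B Y * B W) * OmegaR n (B X Z) V + LinearMap.trace Rr (Mm n) (B Y * B Z) * OmegaR n (B X W) V := by
    intro X Y Z W V
    have w1 : (PowerSeries.C (R := ℝ) (2*((n:ℝ)+1))) * OmegaR n (B X (B Y (B Z W))) V =
        -(OmegaR n X (B Z W) * LinearMap.trace Rr (Mm n) (B Y * B V) - OmegaR n (B Z W) V * LinearMap.trace Rr (Mm n) (B X * B Y)) := by
      have h := Afor X Y (B Z W) V
      rw [c1 Z W V, c1' X Z W] at h
      linear_combination h
    have w2 : (PowerSeries.C (R := ℝ) (2*((n:ℝ)+1))) * OmegaR n (B X (B Y (B Z W))) V =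
        LinearMap.trace Rr (Mm n) (B Y * B W) * OmegaR n (B X Z) V + LinearMap.trace Rr (Mm n) (B Y * B Z) * OmegaR n (B X W) V := by
      have hsmul : (PowerSeries.C (R := ℝ) (2*((n:ℝ)+1))) * OmegaR n (B X (B Y (B Z W))) V
          = OmegaR n (B X ((PowerSeries.C (R := ℝ) (2*((n:ℝ)+1))) • (B Y (B Z W)))) V := by
        rw [map_smul, omega_smul_left]
      rw [hsmul, Avec Y Z W]
      simp only [map_neg, map_sub, map_add, map_smul, c2, smul_zero, zero_add,
        omega_neg_left, omega_sub_left, omega_add_left, omega_smul_left, omega_zero_left]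
      ring
    linear_combination (-1) * w1 + w2 + (LinearMap.trace Rr (Mm n) (B Y * B V)) * (omega_antisymm X (B Z W))
  have hRS : ∀ X Y Z W V : Mm n,
      OmegaR n (B Z W) V * LinearMap.trace Rr (Mm n) (B X * B Y) = LinearMap.trace Rr (Mm n) (B Y * B Z) * OmegaR n (B X W) V := by
    intro X Y Z W V
    have o := hVI X Y Z W V
    have sw := hVI Z Y X W V
    have e_a : OmegaR n (B X W) Z = OmegaR n (B Z W) X := hsymO X W Z
    have e_b : OmegaR n (B X Z) V = OmegaR n (B Z X) V := hsym₁ X Z V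
    have e_c := hrs Z Y
    have e_d := hrs Y X
    have h2 : 2 * (OmegaR n (B Z W) V * LinearMap.trace Rr (Mm n) (B X * B Y))
        = 2 * (LinearMap.trace Rr (Mm n) (B Y * B Z) * OmegaR n (B X W) V) := by
      linear_combination o - sw + (LinearMap.trace Rr (Mm n) (B Y * B V)) * e_a + (LinearMap.trace Rr (Mm n) (B Y * B W)) * e_b
        + (OmegaR n (B X W) V) * e_c - (OmegaR n (B Z W) V) * e_d
    exact mul_left_cancel₀ h2ne h2
  have hz : ∀ Y Z W U U' V : Mm n,
      LinearMap.trace Rr (Mm n) (B Y * B Z) * OmegaR n (B W (B U U')) V = 0 := by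
    intro Y Z W U U' V
    have h := hRS (B U U') Y Z W V
    rw [c1 U U' Y, Bsym (B U U') W, mul_zero] at h
    exact h.symm
  have hvec : ∀ Y Z W U U' : Mm n, (LinearMap.trace Rr (Mm n) (B Y * B Z)) • (B W (B U U')) = 0 := by
    intro Y Z W U U'
    apply nondeg
    intro V
    rw [omega_smul_left]
    exact hz Y Z W U U' V
  have hrr : ∀ Y Z W U : Mm n, LinearMap.trace Rr (Mm n) (B Y * B Z) * LinearMap.trace Rr (Mm n) (B W * B U) = 0 := by
    intro Y Z W U
    have hopz : (LinearMap.trace Rr (Mm n) (B Y * B Z)) • (B W * B U) = 0 := by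
      apply LinearMap.ext
      intro u'
      rw [LinearMap.smul_apply, Module.End.mul_apply, LinearMap.zero_apply]
      exact hvec Y Z W U u'
    have h := congrArg (LinearMap.trace Rr (Mm n)) hopz
    rwa [map_smul, map_zero, smul_eq_mul] at h
  have rzero : ∀ Y Z : Mm n, LinearMap.trace Rr (Mm n) (B Y * B Z) = 0 := fun Y Z => mul_self_eq_zero.mp (hrr Y Z Y Z)
  have BB0 : ∀ X Y : Mm n, B X * B Y = 0 := by
    intro X Y
    apply LinearMap.ext
    intro Z
    rw [Module.End.mul_apply, LinearMap.zero_apply]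
    apply nondeg
    intro T
    have h := Afor X Y Z T
    rw [rzero Z T, rzero Y T, rzero X Z, rzero X Y] at h
    have h0 : (PowerSeries.C (R := ℝ) (2*((n:ℝ)+1))) * OmegaR n (B X (B Y Z)) T = 0 := by linear_combination h
    exact hfactor _ _ h0 hgne
  exact ⟨BB0, rzero⟩

end FlatAux

/-- Over `R = ℝ⟦t⟧`, a formal curve of translation-invariant symplectic
connections on `(ℝ^{2n},Ω)`, `n ≥ 2`, encoded by an `R`-linear `B : M → End_R(M)` with
`Ω_R(B(X)Y,Z)` totally symmetric, which is of Ricci type, satisfies `B(X)∘B(Y) = 0`;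
in particular the formal curvature `B(X)∘B(Y) − B(Y)∘B(X)` and the formal Ricci tensor
`Tr(B(X)∘B(Y))` vanish identically. -/
theorem formal_invariant_ricci_type_is_flat (n : ℕ) (hn : 2 ≤ n)
    (B : (Fin (2*n) → PowerSeries ℝ) →ₗ[PowerSeries ℝ]
      Module.End (PowerSeries ℝ) (Fin (2*n) → PowerSeries ℝ))
    (hsym₁ : ∀ X Y Z, OmegaR n (B X Y) Z = OmegaR n (B Y X) Z)
    (hsym₂ : ∀ X Y Z, OmegaR n (B X Y) Z = OmegaR n (B X Z) Y)
    (hRicci : ∀ X Y Z T,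
      OmegaR n ((B X * B Y - B Y * B X) Z) T =
        (-(1 / (2*((n:ℝ)+1)))) •
          (2 * OmegaR n X Y * LinearMap.trace (PowerSeries ℝ) _ (B Z * B T)
           + OmegaR n X Z * LinearMap.trace (PowerSeries ℝ) _ (B Y * B T)
           + OmegaR n X T * LinearMap.trace (PowerSeries ℝ) _ (B Y * B Z)
           - OmegaR n Y Z * LinearMap.trace (PowerSeries ℝ) _ (B X * B T)
           - OmegaR n Y T * LinearMap.trace (PowerSeries ℝ) _ (B X * B Z))) :
    (∀ X Y, B X * B Y = 0) ∧
    (∀ X Y, B X * B Y - B Y * B X = 0) ∧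
    (∀ X Y, LinearMap.trace (PowerSeries ℝ) _ (B X * B Y) = 0) := by
  obtain ⟨h1, h3⟩ := FlatAux.main n hn B hsym₁ hsym₂ hRicci
  exact ⟨h1, fun X Y => by rw [h1 X Y, h1 Y X, sub_zero], h3⟩
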